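/- Let P be a finite set of points in the Euclidean plane with pairwise distinct distances. Then every point p ∈ P is the nearest neighbor of at most 5 other points of P. -/

import Mathlib

open Real

lemma cos_ge_half (x : ℝ) (hx : |x| ≤ π/3) : 1/2 ≤ Real.cos x := by
  rw [← Real.cos_abs]
  have h := Real.cos_le_cos_of_nonneg_of_le_pi (abs_nonneg x)
    (by linarith [Real.pi_pos]) hx
  rwa [Real.cos_pi_div_three] at h

lemma key (u v : EuclideanSpace ℝ (Fin 2)) (hu : u ≠ 0) (hv : v ≠ 0)
    (h1 : ‖u‖ < ‖u - v‖) (h2 : ‖v‖ < ‖u - v‖) :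
    Real.cos (Complex.arg ⟨u 0, u 1⟩ - Complex.arg ⟨v 0, v 1⟩) < 1/2 := by
  have ha : (0:ℝ) < ‖u‖ := norm_pos_iff.mpr hu
  have hb : (0:ℝ) < ‖v‖ := norm_pos_iff.mpr hv
  have hsq : ‖u - v‖^2 = ‖u‖^2 - 2 * inner ℝ u v + ‖v‖^2 := by
    rw [← real_inner_self_eq_norm_sq, ← real_inner_self_eq_norm_sq,
      ← real_inner_self_eq_norm_sq, inner_sub_sub_self, real_inner_comm v u]; ring
  have hinner : (inner ℝ u v : ℝ) < ‖u‖ * ‖v‖ / 2 := by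
    nlinarith [sq_nonneg (‖u‖ - ‖v‖), mul_pos ha hb]
  have hzu : (⟨u 0, u 1⟩ : ℂ) ≠ 0 := by
    intro h
    apply hu
    have h0 : u 0 = 0 := congrArg Complex.re h
    have h1' : u 1 = 0 := congrArg Complex.im h
    ext i; fin_cases i <;> simp [h0, h1']
  have hzv : (⟨v 0, v 1⟩ : ℂ) ≠ 0 := by
    intro h
    apply hv
    have h0 : v 0 = 0 := congrArg Complex.re h
    have h1' : v 1 = 0 := congrArg Complex.im h
    ext i; fin_cases i <;> simp [h0, h1']
  have habsu : ‖(⟨u 0, u 1⟩ : ℂ)‖ = ‖u‖ := by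
    rw [Complex.norm_def, Complex.normSq_mk, EuclideanSpace.norm_eq]
    simp [Fin.sum_univ_two, sq_abs, sq]
  have habsv : ‖(⟨v 0, v 1⟩ : ℂ)‖ = ‖v‖ := by
    rw [Complex.norm_def, Complex.normSq_mk, EuclideanSpace.norm_eq]
    simp [Fin.sum_univ_two, sq_abs, sq]
  have hcu := Complex.cos_arg hzu
  have hsu := Complex.sin_arg (⟨u 0, u 1⟩ : ℂ)
  have hcv := Complex.cos_arg hzv
  have hsv := Complex.sin_arg (⟨v 0, v 1⟩ : ℂ)
  rw [habsu] at hcu hsu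
  rw [habsv] at hcv hsv
  have hiuv : (inner ℝ u v : ℝ) = u 0 * v 0 + u 1 * v 1 := by
    simp [PiLp.inner_apply, Fin.sum_univ_two]; ring
  rw [Real.cos_sub, hcu, hsu, hcv, hsv]
  rw [div_mul_div_comm, div_mul_div_comm, ← add_div, div_lt_iff₀ (mul_pos ha hb)]
  simp only [Complex.re_ofNat] at *
  nlinarith [hinner, hiuv]

open Classical

theorem stmt_4 (P : Finset (EuclideanSpace ℝ (Fin 2)))
    (hdist : ∀ a ∈ P, ∀ b ∈ P, ∀ c ∈ P, ∀ d ∈ P, a ≠ b → c ≠ d →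
      ({a, b} : Set (EuclideanSpace ℝ (Fin 2))) ≠ {c, d} → dist a b ≠ dist c d)
    (p : EuclideanSpace ℝ (Fin 2)) (hp : p ∈ P) :
    (P.filter (fun q => q ≠ p ∧ ∀ x ∈ P, x ≠ q → x ≠ p → dist q p < dist q x)).card ≤ 5 := by
  by_contra hcard
  push_neg at hcard
  set S := P.filter (fun q => q ≠ p ∧ ∀ x ∈ P, x ≠ q → x ≠ p → dist q p < dist q x) with hSdef
  have hSmem : ∀ q ∈ S, q ∈ P ∧ q ≠ p ∧ ∀ x ∈ P, x ≠ q → x ≠ p → dist q p < dist q x := by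
    intro q hq
    simp only [hSdef, Finset.mem_filter] at hq
    exact ⟨hq.1, hq.2.1, hq.2.2⟩
  set θ : EuclideanSpace ℝ (Fin 2) → ℝ :=
    fun q => Complex.arg ⟨(q - p) 0, (q - p) 1⟩ with hθdef
  have hpi := Real.pi_pos
  have hpair : ∀ q ∈ S, ∀ r ∈ S, q ≠ r → Real.cos (θ q - θ r) < 1/2 := by
    intro q hq r hr hqr
    obtain ⟨hqP, hqp, hqmin⟩ := hSmem q hq
    obtain ⟨hrP, hrp, hrmin⟩ := hSmem r hr
    have h1 : dist q p < dist q r := hqmin r hrP (Ne.symm hqr) hrp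
    have h2 : dist r p < dist r q := hrmin q hqP hqr hqp
    have e : (q - p) - (r - p) = q - r := sub_sub_sub_cancel_right q r p
    apply key (q - p) (r - p) (sub_ne_zero.mpr hqp) (sub_ne_zero.mpr hrp)
    · rw [e, ← dist_eq_norm, ← dist_eq_norm]; exact h1
    · rw [e, ← dist_eq_norm, ← dist_eq_norm, dist_comm q r]; exact h2
  have hSne : S.Nonempty := Finset.card_pos.mp (by omega)
  obtain ⟨q0, hq0⟩ := hSne
  set T := S.erase q0 with hTdef
  have hTcard : 5 ≤ T.card := by
    have h := Finset.card_erase_of_mem hq0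
    rw [← hTdef] at h
    omega
  have hTsub : ∀ q ∈ T, q ∈ S ∧ q ≠ q0 := by
    intro q hq
    exact ⟨Finset.mem_of_mem_erase hq, Finset.ne_of_mem_erase hq⟩
  set δ : EuclideanSpace ℝ (Fin 2) → ℝ :=
    fun q => if θ q0 ≤ θ q then θ q - θ q0 else θ q - θ q0 + 2*π with hδdef
  have hcosδ : ∀ q r, Real.cos (δ q - δ r) = Real.cos (θ q - θ r) := by
    intro q r
    simp only [hδdef]
    split_ifs with h1 h2 h2
    · congr 1; ring
    · rw [show (θ q - θ q0) - (θ r - θ q0 + 2*π) = (θ q - θ r) - 2*π by ring,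
        Real.cos_sub_two_pi]
    · rw [show (θ q - θ q0 + 2*π) - (θ r - θ q0) = (θ q - θ r) + 2*π by ring,
        Real.cos_add_two_pi]
    · congr 1; ring
  have hθbound : ∀ q, -π < θ q ∧ θ q ≤ π := by
    intro q
    exact ⟨Complex.neg_pi_lt_arg _, Complex.arg_le_pi _⟩
  have hδ02 : ∀ q, 0 ≤ δ q ∧ δ q < 2*π := by
    intro q
    obtain ⟨hl, hr⟩ := hθbound q
    obtain ⟨hl0, hr0⟩ := hθbound q0
    simp only [hδdef]
    split_ifs with h
    · constructor <;> linarith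
    · constructor <;> linarith
  have hδrange : ∀ q ∈ T, π/3 < δ q ∧ δ q < 5*π/3 := by
    intro q hq
    obtain ⟨hqS, hqq0⟩ := hTsub q hq
    have hc : Real.cos (δ q) < 1/2 := by
      have := hpair q hqS q0 hq0 hqq0
      have e := hcosδ q q0
      have hd0 : δ q0 = 0 := by simp [hδdef]
      rw [hd0, sub_zero] at e
      linarith [e ▸ this]
    obtain ⟨h0, h2π⟩ := hδ02 q
    constructor
    · by_contra hle
      push_neg at hle
      have : (1:ℝ)/2 ≤ Real.cos (δ q) := cos_ge_half _ (by rw [abs_of_nonneg h0]; linarith)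
      linarith
    · by_contra hge
      push_neg at hge
      have e : Real.cos (2*π - δ q) = Real.cos (δ q) := Real.cos_two_pi_sub _
      have : (1:ℝ)/2 ≤ Real.cos (2*π - δ q) := by
        apply cos_ge_half
        rw [abs_of_nonneg (by linarith)]
        linarith
      linarith
  -- pigeonhole
  set f : EuclideanSpace ℝ (Fin 2) → ℕ := fun q => (⌊(δ q - π/3) * 3 / π⌋).toNat with hfdef
  have hmaps : ∀ q ∈ T, f q ∈ Finset.range 4 := by
    intro q hq
    obtain ⟨h1, h2⟩ := hδrange q hq
    have hx1 : (δ q - π/3) * 3 / π < 4 := by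
      rw [div_lt_iff₀ hpi]; linarith
    have : (⌊(δ q - π/3) * 3 / π⌋ : ℤ) < 4 := by
      exact_mod_cast Int.floor_lt.mpr (by exact_mod_cast hx1)
    simp only [hfdef, Finset.mem_range]
    omega
  have hpig := Finset.exists_ne_map_eq_of_card_lt_of_maps_to
    (s := T) (t := Finset.range 4) (by rw [Finset.card_range]; omega) hmaps
  obtain ⟨q, hq, r, hr, hqr, hfeq⟩ := hpig
  obtain ⟨hq1, hq2⟩ := hδrange q hq
  obtain ⟨hr1, hr2⟩ := hδrange r hr
  have hxq0 : 0 ≤ (δ q - π/3) * 3 / π := by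
    apply div_nonneg _ (le_of_lt hpi); nlinarith
  have hxr0 : 0 ≤ (δ r - π/3) * 3 / π := by
    apply div_nonneg _ (le_of_lt hpi); nlinarith
  have hfloor : ⌊(δ q - π/3) * 3 / π⌋ = ⌊(δ r - π/3) * 3 / π⌋ := by
    have h1 : (0:ℤ) ≤ ⌊(δ q - π/3) * 3 / π⌋ := Int.floor_nonneg.mpr hxq0
    have h2 : (0:ℤ) ≤ ⌊(δ r - π/3) * 3 / π⌋ := Int.floor_nonneg.mpr hxr0
    simp only [hfdef] at hfeq
    omega
  have habs : |δ q - δ r| < π/3 := by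
    have l1 := Int.floor_le ((δ q - π/3) * 3 / π)
    have l2 := Int.lt_floor_add_one ((δ q - π/3) * 3 / π)
    have l3 := Int.floor_le ((δ r - π/3) * 3 / π)
    have l4 := Int.lt_floor_add_one ((δ r - π/3) * 3 / π)
    rw [hfloor] at l1 l2
    have hd : |((δ q - δ r) * 3) / π| < 1 := by
      have hxy : ((δ q - δ r) * 3) / π =
          (δ q - π/3) * 3 / π - (δ r - π/3) * 3 / π := by ring
      rw [hxy, abs_lt]; constructor <;> linarith
    rw [abs_lt] at hd
    obtain ⟨hd1, hd2⟩ := hd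
    rw [div_lt_one hpi] at hd2
    rw [neg_lt, ← neg_div, neg_mul_eq_neg_mul, div_lt_one hpi] at hd1
    rw [abs_lt]
    constructor <;> linarith
  have hge : (1:ℝ)/2 ≤ Real.cos (δ q - δ r) := cos_ge_half _ (le_of_lt habs)
  rw [hcosδ] at hge
  have hlt := hpair q (hTsub q hq).1 r (hTsub r hr).1 hqr
  linarith
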